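/- Let H(x) = ψ'(x)(c − R̃(x,ȳ)) + (ρ+κ)^{−1}ψ(x) where R̃(x,y) = (μκ + ρx − β(ρ+2κ)y)/(ρ(ρ+κ)) and ψ is the increasing fundamental solution of the OU equation. Then the equation H(x) = 0 has exactly one solution x̃ ∈ ℝ. -/

import Mathlib

open Set

/-- Parabolic cylinder function `D_α(x)` for `α < 0` (integral representation). -/
noncomputable def Dcyl (α x : ℝ) : ℝ :=
  Real.exp (-x ^ 2 / 4) / Real.Gamma (-α) *
    ∫ t in Ioi (0 : ℝ), t ^ (-α - 1) * Real.exp (-t ^ 2 / 2 - x * t)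

/-- Increasing fundamental solution of `(σ²/2)u'' + κ(μ−x)u' − ρu = 0`. -/
noncomputable def psi (κ μ σ ρ : ℝ) (x : ℝ) : ℝ :=
  Real.exp (κ * (x - μ) ^ 2 / (2 * σ ^ 2)) *
    Dcyl (-(ρ / κ)) (-((x - μ) / σ) * Real.sqrt (2 * κ))

/-- Decreasing fundamental solution of `(σ²/2)u'' + κ(μ−x)u' − ρu = 0`. -/
noncomputable def phi (κ μ σ ρ : ℝ) (x : ℝ) : ℝ :=
  Real.exp (κ * (x - μ) ^ 2 / (2 * σ ^ 2)) *
    Dcyl (-(ρ / κ)) (((x - μ) / σ) * Real.sqrt (2 * κ))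

/-- `R̃(z,y) = (μκ + ρz − β(ρ+2κ)y)/(ρ(ρ+κ))`. -/
noncomputable def Rt (κ μ ρ β : ℝ) (z y : ℝ) : ℝ :=
  (μ * κ + ρ * z - β * (ρ + 2 * κ) * y) / (ρ * (ρ + κ))

/-- `Q_k(z) = ψ^{(k)}(z)ψ^{(k+2)}(z) − (ψ^{(k+1)}(z))²`. -/
noncomputable def Q (κ μ σ ρ : ℝ) (k : ℕ) (z : ℝ) : ℝ :=
  iteratedDeriv k (psi κ μ σ ρ) z * iteratedDeriv (k + 2) (psi κ μ σ ρ) z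
    - (iteratedDeriv (k + 1) (psi κ μ σ ρ) z) ^ 2

/-- `D(y,z) = ψ(z)[(ρ+κ)(c − R̃(z,y))Q₁(z) + Q₀'(z)]`. -/
noncomputable def Dfun (κ μ σ ρ β c : ℝ) (y z : ℝ) : ℝ :=
  psi κ μ σ ρ z *
    ((ρ + κ) * (c - Rt κ μ ρ β z y) * Q κ μ σ ρ 1 z + deriv (Q κ μ σ ρ 0) z)

/-- `N(y,z) = Q₀(z)[((ρ+2κ)/ρ)ψ'(z) + (ρ+κ)(c − R̃(z,y))ψ''(z) + ψ'(z)]`. -/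
noncomputable def Nfun (κ μ σ ρ β c : ℝ) (y z : ℝ) : ℝ :=
  Q κ μ σ ρ 0 z *
    ((ρ + 2 * κ) / ρ * deriv (psi κ μ σ ρ) z +
      ((ρ + κ) * (c - Rt κ μ ρ β z y) * iteratedDeriv 2 (psi κ μ σ ρ) z
        + deriv (psi κ μ σ ρ) z))

/-- `H(x) = ψ'(x)(c − R̃(x, ybar)) + (ρ+κ)⁻¹ψ(x)`. -/
noncomputable def Hfun (κ μ σ ρ β c ybar : ℝ) (x : ℝ) : ℝ :=
  deriv (psi κ μ σ ρ) x * (c - Rt κ μ ρ β x ybar) + (ρ + κ)⁻¹ * psi κ μ σ ρ x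

open MeasureTheory in
section
open MeasureTheory

noncomputable def fInt (p b : ℝ) : ℝ :=
  ∫ t in Ioi (0:ℝ), t ^ p * Real.exp (-t ^ 2 / 2 + b * t)

lemma fInt_cont (p b : ℝ) :
    ContinuousOn (fun t : ℝ => t ^ p * Real.exp (-t ^ 2 / 2 + b * t)) (Ioi 0) := by
  apply ContinuousOn.mul
  · exact fun t ht => (Real.continuousAt_rpow_const t p (Or.inl (ne_of_gt ht))).continuousWithinAt
  · exact (Real.continuous_exp.comp (by continuity)).continuousOn

lemma fInt_integrable {p : ℝ} (hp : -1 < p) (b : ℝ) :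
    IntegrableOn (fun t : ℝ => t ^ p * Real.exp (-t ^ 2 / 2 + b * t)) (Ioi 0) := by
  have hmaj : IntegrableOn
      (fun t : ℝ => Real.exp (b ^ 2) * (t ^ p * Real.exp (-(4⁻¹) * t ^ 2))) (Ioi 0) :=
    (integrableOn_rpow_mul_exp_neg_mul_sq (by norm_num) hp).const_mul _
  refine hmaj.mono' ((fInt_cont p b).aestronglyMeasurable measurableSet_Ioi) ?_
  filter_upwards [ae_restrict_mem measurableSet_Ioi] with t ht
  have ht0 : (0:ℝ) < t := ht
  have hrp : (0:ℝ) ≤ t ^ p := Real.rpow_nonneg ht0.le p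
  rw [Real.norm_eq_abs, abs_of_nonneg (by positivity)]
  have hexp : Real.exp (-t ^ 2 / 2 + b * t) ≤ Real.exp (b ^ 2) * Real.exp (-(4⁻¹) * t ^ 2) := by
    rw [← Real.exp_add]
    exact Real.exp_le_exp.2 (by nlinarith [sq_nonneg (t / 2 - b)])
  calc t ^ p * Real.exp (-t ^ 2 / 2 + b * t)
      ≤ t ^ p * (Real.exp (b ^ 2) * Real.exp (-(4⁻¹) * t ^ 2)) := by
        exact mul_le_mul_of_nonneg_left hexp hrp
    _ = Real.exp (b ^ 2) * (t ^ p * Real.exp (-(4⁻¹) * t ^ 2)) := by ring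

lemma fInt_pos {p : ℝ} (hp : -1 < p) (b : ℝ) : 0 < fInt p b := by
  have hnn : 0 ≤ᵐ[volume.restrict (Ioi (0:ℝ))]
      fun t : ℝ => t ^ p * Real.exp (-t ^ 2 / 2 + b * t) := by
    filter_upwards [ae_restrict_mem measurableSet_Ioi] with t ht
    have ht0 : (0:ℝ) < t := ht
    positivity
  rw [fInt, setIntegral_pos_iff_support_of_nonneg_ae hnn (fInt_integrable hp b)]
  have hsub : Ioi (0:ℝ) ⊆
      (Function.support fun t : ℝ => t ^ p * Real.exp (-t ^ 2 / 2 + b * t)) ∩ Ioi 0 := by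
    intro t ht
    have ht0 : (0:ℝ) < t := ht
    refine ⟨?_, ht⟩
    simp only [Function.mem_support]
    positivity
  calc (0:ENNReal) < volume (Ioi (0:ℝ)) := by simp [Real.volume_Ioi]
    _ ≤ _ := measure_mono hsub

lemma fInt_hasDerivAt {p : ℝ} (hp : -1 < p) (b : ℝ) :
    HasDerivAt (fun b => fInt p b) (fInt (p + 1) b) b := by
  have hp1 : (-1:ℝ) < p + 1 := by linarith
  have key := hasDerivAt_integral_of_dominated_loc_of_deriv_le
    (μ := volume.restrict (Ioi (0:ℝ))) (x₀ := b)
    (F := fun b t => t ^ p * Real.exp (-t ^ 2 / 2 + b * t))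
    (F' := fun b t => t ^ (p + 1) * Real.exp (-t ^ 2 / 2 + b * t))
    (bound := fun t => t ^ (p + 1) * Real.exp (-t ^ 2 / 2 + (|b| + 1) * t))
    (Metric.ball_mem_nhds b one_pos)
    (Filter.Eventually.of_forall fun b' =>
      (fInt_cont p b').aestronglyMeasurable measurableSet_Ioi)
    (fInt_integrable hp b)
    ((fInt_cont (p + 1) b).aestronglyMeasurable measurableSet_Ioi)
    ?_ (fInt_integrable hp1 (|b| + 1)) ?_
  · exact key.2
  · filter_upwards [ae_restrict_mem measurableSet_Ioi] with t ht
    intro b' hb'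
    have ht0 : (0:ℝ) < t := ht
    have hb'le : b' ≤ |b| + 1 := by
      have := abs_lt.1 (Metric.mem_ball.1 hb')  -- |b' - b| < 1
      cases abs_cases b with
      | inl h => linarith [h.1]
      | inr h => linarith [h.1]
    rw [Real.norm_eq_abs, abs_of_nonneg (by positivity)]
    have : Real.exp (-t ^ 2 / 2 + b' * t) ≤ Real.exp (-t ^ 2 / 2 + (|b| + 1) * t) :=
      Real.exp_le_exp.2 (by nlinarith)
    exact mul_le_mul_of_nonneg_left this (Real.rpow_nonneg ht0.le _)
  · filter_upwards [ae_restrict_mem measurableSet_Ioi] with t ht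
    intro b' _
    have ht0 : (0:ℝ) < t := ht
    have h1 : HasDerivAt (fun y : ℝ => -t ^ 2 / 2 + y * t) t b' := by
      simpa using ((hasDerivAt_id b').mul_const t).const_add (-t ^ 2 / 2)
    have h2 := (h1.exp).const_mul (t ^ p)
    have h3 : t ^ p * (Real.exp (-t ^ 2 / 2 + b' * t) * t)
        = t ^ (p + 1) * Real.exp (-t ^ 2 / 2 + b' * t) := by
      rw [Real.rpow_add_one (ne_of_gt ht0)]; ring
    simpa [h3] using h2

noncomputable def gAux (ν C A μ : ℝ) (n : ℕ) (x : ℝ) : ℝ :=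
  C * A ^ n * fInt (ν - 1 + n) (A * (x - μ))

lemma gAux_exp_pos {ν : ℝ} (hν : 0 < ν) (n : ℕ) : (-1:ℝ) < ν - 1 + n := by
  have : (0:ℝ) ≤ (n:ℝ) := Nat.cast_nonneg n
  linarith

lemma gAux_pos (ν C A μ : ℝ) (hν : 0 < ν) (hC : 0 < C) (hA : 0 < A) (n : ℕ) (x : ℝ) :
    0 < gAux ν C A μ n x :=
  mul_pos (mul_pos hC (pow_pos hA n)) (fInt_pos (gAux_exp_pos hν n) _)

lemma gAux_hasDerivAt (ν C A μ : ℝ) (hν : 0 < ν) (n : ℕ) (x : ℝ) :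
    HasDerivAt (gAux ν C A μ n) (gAux ν C A μ (n + 1) x) x := by
  have hlin : HasDerivAt (fun x : ℝ => A * (x - μ)) A x := by
    simpa using ((hasDerivAt_id x).sub_const μ).const_mul A
  have h := ((fInt_hasDerivAt (gAux_exp_pos hν n) (A * (x - μ))).comp x hlin).const_mul
    (C * A ^ n)
  show HasDerivAt (fun x => C * A ^ n * fInt (ν - 1 + n) (A * (x - μ))) _ x
  refine h.congr_deriv ?_
  have harg : ν - 1 + ((n:ℕ) + 1 : ℕ) = ν - 1 + n + 1 := by push_cast; ring
  rw [gAux, harg]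
  ring

lemma gAux_unique_zero (ν C A μ : ℝ) (hν : 0 < ν) (hC : 0 < C) (hA : 0 < A) (B : ℝ) :
    ∃! x : ℝ, gAux ν C A μ 1 x * (B - x) + gAux ν C A μ 0 x = 0 := by
  have g1pos := gAux_pos ν C A μ hν hC hA 1
  have g2pos := gAux_pos ν C A μ hν hC hA 2
  have g3pos := gAux_pos ν C A μ hν hC hA 3
  have g0pos := gAux_pos ν C A μ hν hC hA 0
  -- derivative of F
  have hdF : ∀ x, HasDerivAt (fun y => gAux ν C A μ 1 y * (B - y) + gAux ν C A μ 0 y)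
      (gAux ν C A μ 2 x * (B - x)) x := by
    intro x
    have h := ((gAux_hasDerivAt ν C A μ hν 1 x).mul ((hasDerivAt_id x).const_sub B)).add
      (gAux_hasDerivAt ν C A μ hν 0 x)
    refine h.congr_deriv ?_
    simp only [id_eq]
    norm_num
  set F : ℝ → ℝ := fun y => gAux ν C A μ 1 y * (B - y) + gAux ν C A μ 0 y with hFdef
  have hFcont : Continuous F := continuous_iff_continuousAt.2 fun x => (hdF x).continuousAt
  have hFpos : ∀ x ≤ B, 0 < F x := by
    intro x hx
    have h1 := g1pos x
    have h0 := g0pos x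
    have : 0 ≤ gAux ν C A μ 1 x * (B - x) := mul_nonneg h1.le (by linarith)
    simp only [hFdef]
    nlinarith
  have hanti : StrictAntiOn F (Ici B) := by
    refine strictAntiOn_of_deriv_neg (convex_Ici B) hFcont.continuousOn ?_
    intro x hx
    rw [interior_Ici] at hx
    rw [(hdF x).deriv]
    exact mul_neg_of_pos_of_neg (g2pos x) (by simp only [mem_Ioi] at hx; linarith)
  -- ψ2 is monotone
  have hg2mono : Monotone (gAux ν C A μ 2) := by
    refine (strictMono_of_deriv_pos fun x => ?_).monotone
    rw [(gAux_hasDerivAt ν C A μ hν 2 x).deriv]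
    exact g3pos x
  set m : ℝ := gAux ν C A μ 2 (B + 1) with hmdef
  have hm : 0 < m := g2pos (B + 1)
  -- G = F + m x is antitone on [B+1, ∞)
  have hdG : ∀ x, HasDerivAt (fun y => F y + m * y) (gAux ν C A μ 2 x * (B - x) + m) x := by
    intro x
    exact (hdF x).add (by simpa using (hasDerivAt_id x).const_mul m)
  have hGanti : AntitoneOn (fun y => F y + m * y) (Ici (B + 1)) := by
    refine antitoneOn_of_deriv_nonpos (convex_Ici _)
      (by fun_prop) (fun x _ => (hdG x).differentiableAt.differentiableWithinAt) ?_
    intro x hx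
    rw [interior_Ici] at hx
    rw [(hdG x).deriv]
    have h1 : m ≤ gAux ν C A μ 2 x := hg2mono (le_of_lt hx)
    have h2 : B - x ≤ -1 := by simp only [mem_Ioi] at hx; linarith
    nlinarith [mul_nonneg (sub_nonneg.2 h1) (by linarith : (0:ℝ) ≤ x - B - 1)]
  set x₀ : ℝ := B + 1 + (|F (B + 1)| + 1) / m with hx₀def
  have hx₀ge : B + 1 ≤ x₀ := le_add_of_nonneg_right (by positivity)
  have hFx₀ : F x₀ < 0 := by
    have hGle : F x₀ + m * x₀ ≤ F (B + 1) + m * (B + 1) :=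
      hGanti (self_mem_Ici) hx₀ge hx₀ge
    have hcancel : m * ((|F (B + 1)| + 1) / m) = |F (B + 1)| + 1 := by
      field_simp
    have habs := le_abs_self (F (B + 1))
    have : m * x₀ = m * (B + 1) + (|F (B + 1)| + 1) := by
      rw [hx₀def]; rw [mul_add, hcancel]
    linarith
  have hFB : 0 < F B := hFpos B le_rfl
  have hBx₀ : B ≤ x₀ := by linarith
  obtain ⟨x, hxmem, hFx⟩ :=
    intermediate_value_Icc' hBx₀ hFcont.continuousOn ⟨hFx₀.le, hFB.le⟩
  have hzero_mem : ∀ y, F y = 0 → y ∈ Ici B := by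
    intro y hy
    by_contra h
    exact (hFpos y (le_of_not_ge fun h' => h (mem_Ici.2 h'))).ne' hy
  refine ⟨x, hFx, ?_⟩
  intro y hy
  exact hanti.injOn (hzero_mem y hy) (hzero_mem x hFx) (hy.trans hFx.symm)

lemma psi_eq {κ σ : ℝ} (hκ : 0 < κ) (hσ : 0 < σ) (μ ρ x : ℝ) :
    psi κ μ σ ρ x = (Real.Gamma (ρ / κ))⁻¹ *
      fInt (ρ / κ - 1) (Real.sqrt (2 * κ) / σ * (x - μ)) := by
  have hs : Real.sqrt (2 * κ) ^ 2 = 2 * κ := Real.sq_sqrt (by linarith)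
  rw [psi, Dcyl, neg_neg, fInt]
  have hI : (∫ t in Ioi (0:ℝ), t ^ (ρ / κ - 1) *
        Real.exp (-t ^ 2 / 2 - -((x - μ) / σ) * Real.sqrt (2 * κ) * t))
      = ∫ t in Ioi (0:ℝ), t ^ (ρ / κ - 1) *
        Real.exp (-t ^ 2 / 2 + Real.sqrt (2 * κ) / σ * (x - μ) * t) := by
    congr 1
    funext t
    congr 2
    ring
  rw [hI]
  have hz : Real.exp (κ * (x - μ) ^ 2 / (2 * σ ^ 2)) *
      Real.exp (-(-((x - μ) / σ) * Real.sqrt (2 * κ)) ^ 2 / 4) = 1 := by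
    rw [← Real.exp_add, Real.exp_eq_one_iff]
    have h1 : (-((x - μ) / σ) * Real.sqrt (2 * κ)) ^ 2 = ((x - μ) / σ) ^ 2 * (2 * κ) := by
      rw [mul_pow, neg_sq, hs]
    rw [h1]
    field_simp
    ring
  generalize (∫ t in Ioi (0:ℝ), t ^ (ρ / κ - 1) *
      Real.exp (-t ^ 2 / 2 + Real.sqrt (2 * κ) / σ * (x - μ) * t)) = I
  linear_combination ((Real.Gamma (ρ / κ))⁻¹ * I) * hz

end

/-- The equation `H(x) = 0` has exactly one solution `x̃ ∈ ℝ`. -/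
theorem stmt11 (κ σ ρ μ β c ybar : ℝ) (hκ : 0 < κ) (hσ : 0 < σ) (hρ : 0 < ρ)
    (hβ : 0 < β) (hc : 0 ≤ c) (hybar : 0 < ybar) :
    ∃! x : ℝ, Hfun κ μ σ ρ β c ybar x = 0 := by
  have hν : 0 < ρ / κ := div_pos hρ hκ
  have hA : 0 < Real.sqrt (2 * κ) / σ := div_pos (Real.sqrt_pos.2 (by linarith)) hσ
  have hC : 0 < (Real.Gamma (ρ / κ))⁻¹ := inv_pos.2 (Real.Gamma_pos_of_pos hν)
  have hρκ : (0:ℝ) < ρ + κ := by linarith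
  have hψ0 : psi κ μ σ ρ =
      gAux (ρ / κ) (Real.Gamma (ρ / κ))⁻¹ (Real.sqrt (2 * κ) / σ) μ 0 := by
    funext x
    rw [psi_eq hκ hσ μ ρ x, gAux]
    norm_num
  have hψderiv : deriv (psi κ μ σ ρ) =
      gAux (ρ / κ) (Real.Gamma (ρ / κ))⁻¹ (Real.sqrt (2 * κ) / σ) μ 1 := by
    funext x
    rw [hψ0]
    have := (gAux_hasDerivAt (ρ / κ) (Real.Gamma (ρ / κ))⁻¹ (Real.sqrt (2 * κ) / σ) μ hν
      0 x).deriv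
    simpa using this
  set B : ℝ := (ρ + κ) * c - (μ * κ - β * (ρ + 2 * κ) * ybar) / ρ with hB
  have hRt : ∀ x : ℝ, c - Rt κ μ ρ β x ybar = (B - x) / (ρ + κ) := by
    intro x
    rw [Rt, hB]
    field_simp
    ring
  have hH : ∀ x : ℝ, Hfun κ μ σ ρ β c ybar x = (ρ + κ)⁻¹ *
      (gAux (ρ / κ) (Real.Gamma (ρ / κ))⁻¹ (Real.sqrt (2 * κ) / σ) μ 1 x * (B - x) +
        gAux (ρ / κ) (Real.Gamma (ρ / κ))⁻¹ (Real.sqrt (2 * κ) / σ) μ 0 x) := by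
    intro x
    rw [Hfun, hRt, hψderiv, hψ0]
    field_simp
  obtain ⟨x, hx, huniq⟩ :=
    gAux_unique_zero (ρ / κ) (Real.Gamma (ρ / κ))⁻¹ (Real.sqrt (2 * κ) / σ) μ hν hC hA B
  refine ⟨x, ?_, ?_⟩
  · show Hfun κ μ σ ρ β c ybar x = 0
    rw [hH, hx, mul_zero]
  · intro y hy
    have hy' : Hfun κ μ σ ρ β c ybar y = 0 := hy
    apply huniq
    show _ = 0
    have h2 := hH y
    rw [hy'] at h2
    rcases mul_eq_zero.1 h2.symm with h | h
    · exact absurd h (by positivity)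
    · exact h
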